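/- arXiv:1603.04726 — 3 statements merged into one kernel-verified Lean document; each statement's English description precedes it below -/
import Mathlib

section
/- Let A, S, Q be closed subspaces of a Hilbert space H with S*Q invertible. Define cos(Q,S) = inf_{v∈Q,‖v‖=1} ‖P_S v‖ and sin(A,S) = sup_{v∈A,‖v‖=1} ‖P_{S⊥} v‖, and assume cos(Q,S) > 0. Then for every f ∈ A, the reconstruction error ε = f − P_A E_{Q,S⊥} f satisfies ‖ε‖² ≤ (sin²(A,S)/cos²(Q,S)) ‖P_{Q⊥} f‖². -/
open ContinuousLinearMap

/-- The cosine of the angle between closed subspaces: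
`cos(U,V) = inf_{v ∈ U, ‖v‖ = 1} ‖P_V v‖`. -/
noncomputable def cosAngle {H : Type*} [NormedAddCommGroup H] [InnerProductSpace ℂ H]
    (U V : Submodule ℂ H) [Submodule.HasOrthogonalProjection V] : ℝ :=
  sInf {r | ∃ v ∈ U, ‖v‖ = 1 ∧ r = ‖(Submodule.orthogonalProjectionOnto V v : H)‖}

/-- The sine of the angle between closed subspaces:
`sin(U,V) = sup_{v ∈ U, ‖v‖ = 1} ‖P_{Vᗮ} v‖`. -/
noncomputable def sinAngle {H : Type*} [NormedAddCommGroup H] [InnerProductSpace ℂ H]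
    (U V : Submodule ℂ H) [Submodule.HasOrthogonalProjection Vᗮ] : ℝ :=
  sSup {r | ∃ v ∈ U, ‖v‖ = 1 ∧ r = ‖(Submodule.orthogonalProjectionOnto Vᗮ v : H)‖}

section helpers

variable {H : Type*} [NormedAddCommGroup H] [InnerProductSpace ℂ H]

local notation "⟪" x ", " y "⟫" => @inner ℂ _ _ x y

lemma norm_proj_le (K : Submodule ℂ H) [Submodule.HasOrthogonalProjection K] (v : H) :
    ‖(Submodule.orthogonalProjectionOnto K v : H)‖ ≤ ‖v‖ := by
  calc ‖(Submodule.orthogonalProjectionOnto K v : H)‖ = ‖Submodule.orthogonalProjectionOnto K v‖ := rfl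
    _ ≤ ‖Submodule.orthogonalProjectionOnto K‖ * ‖v‖ := (Submodule.orthogonalProjectionOnto K).le_opNorm v
    _ ≤ 1 * ‖v‖ := mul_le_mul_of_nonneg_right (Submodule.orthogonalProjectionOnto_norm_le K) (norm_nonneg v)
    _ = ‖v‖ := one_mul _

lemma sinAngle_nonneg (U V : Submodule ℂ H) [Submodule.HasOrthogonalProjection Vᗮ] :
    0 ≤ sinAngle U V := by
  apply Real.sSup_nonneg
  rintro r ⟨v, hv, h1, rfl⟩
  positivity

lemma cosAngle_nonneg (U V : Submodule ℂ H) [Submodule.HasOrthogonalProjection V] :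
    0 ≤ cosAngle U V := by
  apply Real.sInf_nonneg
  rintro r ⟨v, hv, h1, rfl⟩
  positivity

lemma cos_bddBelow (U V : Submodule ℂ H) [Submodule.HasOrthogonalProjection V] :
    BddBelow {r | ∃ v ∈ U, ‖v‖ = 1 ∧ r = ‖(Submodule.orthogonalProjectionOnto V v : H)‖} := by
  refine ⟨0, ?_⟩
  rintro r ⟨v, hv, h1, rfl⟩
  positivity

lemma sin_bddAbove (U V : Submodule ℂ H) [Submodule.HasOrthogonalProjection Vᗮ] :
    BddAbove {r | ∃ v ∈ U, ‖v‖ = 1 ∧ r = ‖(Submodule.orthogonalProjectionOnto Vᗮ v : H)‖} := by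
  refine ⟨1, ?_⟩
  rintro r ⟨v, hv, h1, rfl⟩
  calc ‖(Submodule.orthogonalProjectionOnto Vᗮ v : H)‖ ≤ ‖v‖ := norm_proj_le _ _
    _ = 1 := h1

lemma unit_smul_mem {U : Submodule ℂ H} {a : H} (ha : a ∈ U) (h : a ≠ 0) :
    ((‖a‖ : ℂ))⁻¹ • a ∈ U ∧ ‖((‖a‖ : ℂ))⁻¹ • a‖ = 1 := by
  have hna : (0:ℝ) < ‖a‖ := norm_pos_iff.2 h
  refine ⟨U.smul_mem _ ha, ?_⟩
  rw [norm_smul, norm_inv, Complex.norm_real, Real.norm_eq_abs, abs_of_pos hna,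
    inv_mul_cancel₀ hna.ne']

lemma sin_bound (U V : Submodule ℂ H) [Submodule.HasOrthogonalProjection Vᗮ] {a : H} (ha : a ∈ U) :
    ‖(Submodule.orthogonalProjectionOnto Vᗮ a : H)‖ ≤ sinAngle U V * ‖a‖ := by
  rcases eq_or_ne a 0 with rfl | h
  · simp only [map_zero, ZeroMemClass.coe_zero, norm_zero, mul_zero, le_refl]
  · have hna : (0:ℝ) < ‖a‖ := norm_pos_iff.2 h
    obtain ⟨hu, hnu⟩ := unit_smul_mem ha h
    have hmem : ‖a‖⁻¹ * ‖(Submodule.orthogonalProjectionOnto Vᗮ a : H)‖ ∈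
        {r | ∃ v ∈ U, ‖v‖ = 1 ∧ r = ‖(Submodule.orthogonalProjectionOnto Vᗮ v : H)‖} := by
      refine ⟨_, hu, hnu, ?_⟩
      rw [map_smul, Submodule.coe_smul, norm_smul, norm_inv, Complex.norm_real,
        Real.norm_eq_abs, abs_of_pos hna]
    have hle := le_csSup (sin_bddAbove U V) hmem
    calc ‖(Submodule.orthogonalProjectionOnto Vᗮ a : H)‖
        = ‖a‖ * (‖a‖⁻¹ * ‖(Submodule.orthogonalProjectionOnto Vᗮ a : H)‖) := by
          rw [← mul_assoc, mul_inv_cancel₀ hna.ne', one_mul]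
      _ ≤ ‖a‖ * sinAngle U V := mul_le_mul_of_nonneg_left hle hna.le
      _ = sinAngle U V * ‖a‖ := mul_comm _ _

lemma cos_bound (U V : Submodule ℂ H) [Submodule.HasOrthogonalProjection V] {a : H} (ha : a ∈ U) :
    cosAngle U V * ‖a‖ ≤ ‖(Submodule.orthogonalProjectionOnto V a : H)‖ := by
  rcases eq_or_ne a 0 with rfl | h
  · simp only [map_zero, ZeroMemClass.coe_zero, norm_zero, mul_zero, le_refl]
  · have hna : (0:ℝ) < ‖a‖ := norm_pos_iff.2 h
    obtain ⟨hu, hnu⟩ := unit_smul_mem ha h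
    have hmem : ‖a‖⁻¹ * ‖(Submodule.orthogonalProjectionOnto V a : H)‖ ∈
        {r | ∃ v ∈ U, ‖v‖ = 1 ∧ r = ‖(Submodule.orthogonalProjectionOnto V v : H)‖} := by
      refine ⟨_, hu, hnu, ?_⟩
      rw [map_smul, Submodule.coe_smul, norm_smul, norm_inv, Complex.norm_real,
        Real.norm_eq_abs, abs_of_pos hna]
    have hle := csInf_le (cos_bddBelow U V) hmem
    calc cosAngle U V * ‖a‖ ≤ (‖a‖⁻¹ * ‖(Submodule.orthogonalProjectionOnto V a : H)‖) * ‖a‖ :=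
        mul_le_mul_of_nonneg_right hle (norm_nonneg a)
      _ = ‖(Submodule.orthogonalProjectionOnto V a : H)‖ := by
          rw [mul_comm, ← mul_assoc, mul_inv_cancel₀ hna.ne', one_mul]

/-- Key inner-product trick: if every `a ∈ U` satisfies `‖P_{Vᗮ} a‖ ≤ s‖a‖`,
then for `w ∈ Vᗮ`, `‖P_U w‖ ≤ s‖w‖`. -/
lemma proj_bound (U V : Submodule ℂ H) [Submodule.HasOrthogonalProjection U] [Submodule.HasOrthogonalProjection Vᗮ]
    {s : ℝ} (hs : 0 ≤ s)
    (hUV : ∀ a ∈ U, ‖(Submodule.orthogonalProjectionOnto Vᗮ a : H)‖ ≤ s * ‖a‖)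
    {w : H} (hw : w ∈ Vᗮ) :
    ‖(Submodule.orthogonalProjectionOnto U w : H)‖ ≤ s * ‖w‖ := by
  set e : H := (Submodule.orthogonalProjectionOnto U w : H) with he
  have heU : e ∈ U := (Submodule.orthogonalProjectionOnto U w).2
  have h1 : (⟪e, e⟫) = ⟪w, e⟫ := by
    have h := Submodule.inner_starProjection_left_eq_right U w e
    rwa [Submodule.starProjection_eq_self_iff.2 heU] at h
  have h2 : (⟪w, e⟫) = ⟪w, (Submodule.orthogonalProjectionOnto Vᗮ e : H)⟫ := by
    have hm : e - (Submodule.orthogonalProjectionOnto Vᗮ e : H) ∈ Vᗮᗮ :=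
      Submodule.sub_starProjection_mem_orthogonal (K := Vᗮ) e
    have h0 : ⟪w, e - (Submodule.orthogonalProjectionOnto Vᗮ e : H)⟫ = 0 :=
      (Submodule.mem_orthogonal _ _).1 hm w hw
    rw [inner_sub_right] at h0
    exact sub_eq_zero.1 h0
  have h3 : ‖e‖ ^ 2 ≤ ‖w‖ * (s * ‖e‖) := by
    have hre : ‖e‖ ^ 2 = RCLike.re (⟪w, (Submodule.orthogonalProjectionOnto Vᗮ e : H)⟫) := by
      rw [← h2, ← h1, inner_self_eq_norm_sq]
    rw [hre]
    calc RCLike.re (⟪w, (Submodule.orthogonalProjectionOnto Vᗮ e : H)⟫)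
        ≤ ‖w‖ * ‖(Submodule.orthogonalProjectionOnto Vᗮ e : H)‖ := re_inner_le_norm _ _
      _ ≤ ‖w‖ * (s * ‖e‖) := mul_le_mul_of_nonneg_left (hUV e heU) (norm_nonneg w)
  rcases (norm_nonneg e).eq_or_lt with h | h
  · rw [← h]; positivity
  · have h4 : ‖e‖ * ‖e‖ ≤ (s * ‖w‖) * ‖e‖ := by nlinarith [h3]
    exact le_of_mul_le_mul_right h4 h

end helpers

/-- First SPURS error bound: for `f` in the signal subspace `As`,
`‖f − P_A E_{Q,Sᗮ} f‖² ≤ (sin²(A,S)/cos²(Q,S)) ‖P_{Qᗮ} f‖²`, where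
`E_{Q,Sᗮ} = Q (S*Q)⁻¹ S*` is built from the synthesis operators `Qop`, `Sop` whose ranges
are the subspaces `Qs` and `Ss`, and `cos(Q,S) > 0`. -/
theorem spurs_error_bound_first
    {H L : Type*} [NormedAddCommGroup H] [InnerProductSpace ℂ H] [CompleteSpace H]
    [NormedAddCommGroup L] [InnerProductSpace ℂ L] [CompleteSpace L]
    (Qop Sop : L →L[ℂ] H) (B : L →L[ℂ] L)
    (hB₁ : B ∘L (adjoint Sop ∘L Qop) = ContinuousLinearMap.id ℂ L)
    (hB₂ : (adjoint Sop ∘L Qop) ∘L B = ContinuousLinearMap.id ℂ L)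
    (As Ss Qs : Submodule ℂ H)
    [Submodule.HasOrthogonalProjection As] [Submodule.HasOrthogonalProjection Ss] [Submodule.HasOrthogonalProjection Qs]
    (hQs : LinearMap.range (Qop : L →ₗ[ℂ] H) = Qs) (hSs : LinearMap.range (Sop : L →ₗ[ℂ] H) = Ss)
    (hcos : 0 < cosAngle Qs Ss)
    (f : H) (hf : f ∈ As) :
    ‖f - ((Submodule.orthogonalProjectionOnto As) ((Qop ∘L B ∘L adjoint Sop) f) : H)‖ ^ 2 ≤
      (sinAngle As Ss ^ 2 / cosAngle Qs Ss ^ 2) * ‖(Submodule.orthogonalProjectionOnto Qsᗮ f : H)‖ ^ 2 := by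
  set g : H := (Qop ∘L B ∘L adjoint Sop) f with hgdef
  have hg : g ∈ Qs := by
    rw [← hQs]
    exact ⟨B (adjoint Sop f), rfl⟩
  set w : H := f - g with hwdef
  have hw : w ∈ Ssᗮ := by
    have hA : adjoint Sop w = 0 := by
      have h := congrArg (fun T => T (adjoint Sop f)) hB₂
      simp only [ContinuousLinearMap.comp_apply, ContinuousLinearMap.id_apply] at h
      show adjoint Sop (f - g) = 0
      rw [map_sub, hgdef]
      simp only [ContinuousLinearMap.comp_apply]
      rw [h, sub_self]
    rw [← hSs]
    apply (Submodule.mem_orthogonal _ _).2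
    rintro u ⟨l, rfl⟩
    calc (inner ℂ (Sop l) w : ℂ) = inner ℂ l (adjoint Sop w) := (adjoint_inner_right Sop l w).symm
      _ = 0 := by rw [hA, inner_zero_right]
  have hx : (Submodule.orthogonalProjectionOnto Qsᗮ w : H) = (Submodule.orthogonalProjectionOnto Qsᗮ f : H) := by
    have hz : Submodule.orthogonalProjectionOnto Qsᗮ g = 0 :=
      Submodule.orthogonalProjectionOnto_eq_zero_iff.2 (Qs.le_orthogonal_orthogonal hg)
    rw [hwdef, map_sub, hz]
    push_cast
    simp
  have hε : f - ((Submodule.orthogonalProjectionOnto As) g : H) = (Submodule.orthogonalProjectionOnto As w : H) := by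
    rw [hwdef, map_sub]
    push_cast
    rw [show (Submodule.orthogonalProjectionOnto As f : H) = f from Submodule.starProjection_eq_self_iff.2 hf]
  set s := sinAngle As Ss with hsdef
  set c := cosAngle Qs Ss with hcdef
  have hs0 : 0 ≤ s := sinAngle_nonneg As Ss
  have h1 : ‖f - ((Submodule.orthogonalProjectionOnto As) g : H)‖ ≤ s * ‖w‖ := by
    rw [hε]
    exact proj_bound As Ss hs0 (fun a ha => sin_bound As Ss ha) hw
  have h2 : c * ‖w‖ ≤ ‖(Submodule.orthogonalProjectionOnto Qsᗮ f : H)‖ := by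
    rcases eq_or_ne w 0 with hw0 | hw0
    · rw [hw0, norm_zero, mul_zero]; positivity
    · -- Qs is nontrivial: otherwise cosAngle = sInf ∅ = 0
      have hQne : {r | ∃ v ∈ Qs, ‖v‖ = 1 ∧ r = ‖(Submodule.orthogonalProjectionOnto Ss v : H)‖}.Nonempty := by
        by_contra hne
        rw [Set.not_nonempty_iff_eq_empty] at hne
        rw [hcdef, cosAngle, hne, Real.sInf_empty] at hcos
        exact lt_irrefl 0 hcos
      set sQ := sinAngle Qs Ss with hsQdef
      have hsQ0 : 0 ≤ sQ := sinAngle_nonneg Qs Ss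
      -- sQ² ≤ 1 - c²
      have hc1 : c ≤ 1 := by
        obtain ⟨r₀, v₀, hv₀, hv₀1, rfl⟩ := hQne
        calc c ≤ ‖(Submodule.orthogonalProjectionOnto Ss v₀ : H)‖ :=
            csInf_le (cos_bddBelow Qs Ss) ⟨v₀, hv₀, hv₀1, rfl⟩
          _ ≤ ‖v₀‖ := norm_proj_le _ _
          _ = 1 := hv₀1
      have hsQsq : sQ ^ 2 ≤ 1 - c ^ 2 := by
        have hub : ∀ r ∈ {r | ∃ v ∈ Qs, ‖v‖ = 1 ∧ r = ‖(Submodule.orthogonalProjectionOnto Ssᗮ v : H)‖},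
            r ≤ Real.sqrt (1 - c ^ 2) := by
          rintro r ⟨v, hv, h1', rfl⟩
          have hcle : c ≤ ‖(Submodule.orthogonalProjectionOnto Ss v : H)‖ :=
            csInf_le (cos_bddBelow Qs Ss) ⟨v, hv, h1', rfl⟩
          have hpyth := Submodule.norm_sq_eq_add_norm_sq_projection v Ss
          rw [h1'] at hpyth
          have hle : ‖(Submodule.orthogonalProjectionOnto Ssᗮ v : H)‖ ^ 2 ≤ 1 - c ^ 2 := by
            have : c ^ 2 ≤ ‖(Submodule.orthogonalProjectionOnto Ss v : H)‖ ^ 2 :=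
              pow_le_pow_left₀ hcos.le hcle 2
            simp only [Submodule.coe_norm] at hpyth ⊢
            nlinarith
          have h10 : (0:ℝ) ≤ 1 - c ^ 2 := le_trans (by positivity) hle
          rw [← Real.sqrt_sq (norm_nonneg _)]
          exact Real.sqrt_le_sqrt hle
        have hle : sQ ≤ Real.sqrt (1 - c ^ 2) := Real.sSup_le hub (Real.sqrt_nonneg _)
        have h10 : (0:ℝ) ≤ 1 - c ^ 2 := by nlinarith
        calc sQ ^ 2 ≤ Real.sqrt (1 - c ^ 2) ^ 2 := pow_le_pow_left₀ hsQ0 hle 2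
          _ = 1 - c ^ 2 := Real.sq_sqrt h10
      -- for every unit vector v in Ssᗮ, c ≤ ‖P_{Qsᗮ} v‖
      have hclaim : ∀ v ∈ Ssᗮ, ‖v‖ = 1 → c ≤ ‖(Submodule.orthogonalProjectionOnto Qsᗮ v : H)‖ := by
        intro v hv hv1
        have hproj : ‖(Submodule.orthogonalProjectionOnto Qsᗮᗮ v : H)‖ ≤ sQ * ‖v‖ :=
          proj_bound Qsᗮᗮ Ss hsQ0
            (fun a ha => sin_bound Qs Ss (by rwa [Qs.orthogonal_orthogonal] at ha)) hv
        have hpyth := Submodule.norm_sq_eq_add_norm_sq_projection v Qsᗮ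
        rw [hv1] at hpyth
        rw [hv1, mul_one] at hproj
        have hsq : c ^ 2 ≤ ‖(Submodule.orthogonalProjectionOnto Qsᗮ v : H)‖ ^ 2 := by
          have h5 : ‖(Submodule.orthogonalProjectionOnto Qsᗮᗮ v : H)‖ ^ 2 ≤ sQ ^ 2 :=
            pow_le_pow_left₀ (norm_nonneg _) hproj 2
          simp only [Submodule.coe_norm] at hpyth ⊢
          nlinarith
        exact le_of_pow_le_pow_left₀ two_ne_zero (norm_nonneg _) hsq
      have hcc' : c ≤ cosAngle Ssᗮ Qsᗮ := by
        obtain ⟨huS, hun⟩ := unit_smul_mem hw hw0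
        refine le_csInf ⟨_, ⟨_, huS, hun, rfl⟩⟩ ?_
        rintro r ⟨v, hv, hv1, rfl⟩
        exact hclaim v hv hv1
      calc c * ‖w‖ ≤ cosAngle Ssᗮ Qsᗮ * ‖w‖ :=
          mul_le_mul_of_nonneg_right hcc' (norm_nonneg w)
        _ ≤ ‖(Submodule.orthogonalProjectionOnto Qsᗮ w : H)‖ := cos_bound Ssᗮ Qsᗮ hw
        _ = ‖(Submodule.orthogonalProjectionOnto Qsᗮ f : H)‖ := by rw [hx]
  -- combine
  rw [div_mul_eq_mul_div, le_div_iff₀ (by positivity : (0:ℝ) < c ^ 2)]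
  have e1 : ‖f - ((Submodule.orthogonalProjectionOnto As) g : H)‖ ^ 2 ≤ (s * ‖w‖) ^ 2 :=
    pow_le_pow_left₀ (norm_nonneg _) h1 2
  have e2 : (c * ‖w‖) ^ 2 ≤ ‖(Submodule.orthogonalProjectionOnto Qsᗮ f : H)‖ ^ 2 :=
    pow_le_pow_left₀ (by positivity) h2 2
  nlinarith [mul_le_mul_of_nonneg_right e1 (sq_nonneg c),
    mul_le_mul_of_nonneg_left e2 (sq_nonneg s)]
end

section
/- For any f in a Hilbert space and the oblique projection E_{S⊥,Q} onto S⊥ along Q, the bound ‖E_{S⊥,Q} f‖ ≤ ‖P_{Q⊥} f‖ / cos(S⊥, Q⊥) holds, provided cos(S⊥, Q⊥) > 0. -/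
open ContinuousLinearMap

/-- For any `f` and the oblique projection `E_{Sᗮ,Q} = I − Q (S*Q)⁻¹ S*`
onto `Sᗮ` along `Q`: `‖E_{Sᗮ,Q} f‖ ≤ ‖P_{Qᗮ} f‖ / cos(Sᗮ, Qᗮ)`, provided
`cos(Sᗮ, Qᗮ) > 0`. -/
theorem oblique_projection_norm_bound
    {H L : Type*} [NormedAddCommGroup H] [InnerProductSpace ℂ H] [CompleteSpace H]
    [NormedAddCommGroup L] [InnerProductSpace ℂ L] [CompleteSpace L]
    (Qop Sop : L →L[ℂ] H) (B : L →L[ℂ] L)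
    (hB₁ : B ∘L (adjoint Sop ∘L Qop) = ContinuousLinearMap.id ℂ L)
    (hB₂ : (adjoint Sop ∘L Qop) ∘L B = ContinuousLinearMap.id ℂ L)
    (Ss Qs : Submodule ℂ H)
    [Submodule.HasOrthogonalProjection Ss] [Submodule.HasOrthogonalProjection Qs]
    (hQs : LinearMap.range (Qop : L →ₗ[ℂ] H) = Qs) (hSs : LinearMap.range (Sop : L →ₗ[ℂ] H) = Ss)
    (hcos : 0 < cosAngle Ssᗮ Qsᗮ)
    (f : H) :
    ‖(ContinuousLinearMap.id ℂ H - Qop ∘L B ∘L adjoint Sop) f‖ ≤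
      ‖(Submodule.orthogonalProjectionOnto Qsᗮ f : H)‖ / cosAngle Ssᗮ Qsᗮ := by
  set g : H := (ContinuousLinearMap.id ℂ H - Qop ∘L B ∘L adjoint Sop) f with hg
  have hg' : g = f - Qop (B (adjoint Sop f)) := by
    simp [hg, sub_apply, comp_apply]
  -- adjoint Sop annihilates g
  have hSadj : adjoint Sop g = 0 := by
    have h2 := congrArg (fun T => T (B (adjoint Sop f))) hB₂
    simp only [comp_apply, id_apply] at h2
    rw [hg', map_sub]
    have h3 := congrArg (fun T => T (adjoint Sop f)) hB₂
    simp only [comp_apply, id_apply] at h3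
    rw [h3, sub_self]
  -- g ∈ Ssᗮ
  have hmem : g ∈ Ssᗮ := by
    rw [Submodule.mem_orthogonal]
    rintro u hu
    rw [← hSs] at hu
    obtain ⟨l, rfl⟩ := hu
    rw [ContinuousLinearMap.coe_coe, ← ContinuousLinearMap.adjoint_inner_right, hSadj, inner_zero_right]
  -- projection of g equals projection of f
  have hPker : Submodule.orthogonalProjectionOnto Qsᗮ (Qop (B (adjoint Sop f))) = 0 := by
    apply Submodule.orthogonalProjectionOnto_apply_of_mem_orthogonal
    exact Submodule.le_orthogonal_orthogonal Qs (hQs ▸ LinearMap.mem_range_self _ _)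
  have hPE : Submodule.orthogonalProjectionOnto Qsᗮ g = Submodule.orthogonalProjectionOnto Qsᗮ f := by
    rw [hg', map_sub, hPker, sub_zero]
  -- key: cos * ‖g‖ ≤ ‖P g‖
  have key : cosAngle Ssᗮ Qsᗮ * ‖g‖ ≤ ‖(Submodule.orthogonalProjectionOnto Qsᗮ g : H)‖ := by
    rcases eq_or_ne g 0 with h | h
    · simp [h]
    · have hn : (0:ℝ) < ‖g‖ := norm_pos_iff.2 h
      have hv : ((‖g‖⁻¹ : ℝ) : ℂ) • g ∈ Ssᗮ := Ssᗮ.smul_mem _ hmem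
      have hv1 : ‖((‖g‖⁻¹ : ℝ) : ℂ) • g‖ = 1 := by
        rw [norm_smul, Complex.norm_real, Real.norm_eq_abs, abs_of_pos (inv_pos.2 hn),
          inv_mul_cancel₀ hn.ne']
      have hle : cosAngle Ssᗮ Qsᗮ ≤
          ‖(Submodule.orthogonalProjectionOnto Qsᗮ (((‖g‖⁻¹ : ℝ) : ℂ) • g) : H)‖ := by
        apply csInf_le
        · exact ⟨0, by rintro r ⟨v, _, _, rfl⟩; exact norm_nonneg _⟩
        · exact ⟨_, hv, hv1, rfl⟩
      rw [map_smul] at hle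
      have : (((Submodule.orthogonalProjectionOnto Qsᗮ) g : Qsᗮ) : H) = Submodule.orthogonalProjectionOnto Qsᗮ g := rfl
      rw [Submodule.coe_smul, norm_smul, Complex.norm_real, Real.norm_eq_abs,
        abs_of_pos (inv_pos.2 hn)] at hle
      calc cosAngle Ssᗮ Qsᗮ * ‖g‖
          ≤ (‖g‖⁻¹ * ‖(Submodule.orthogonalProjectionOnto Qsᗮ g : H)‖) * ‖g‖ := by
            exact mul_le_mul_of_nonneg_right hle hn.le
        _ = ‖(Submodule.orthogonalProjectionOnto Qsᗮ g : H)‖ := by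
            field_simp
  rw [le_div_iff₀ hcos, mul_comm, ← hPE]
  exact key
end

section
/- For closed subspaces U, V of a Hilbert space, sin(U,V) = sin(V⊥, U⊥), where sin(U,V) = sup over unit vectors u ∈ U of ‖P_{V⊥} u‖. -/
lemma proj_congr {H : Type*} [NormedAddCommGroup H] [InnerProductSpace ℂ H]
    {K₁ K₂ : Submodule ℂ H} [Submodule.HasOrthogonalProjection K₁] [Submodule.HasOrthogonalProjection K₂]
    (h : K₁ = K₂) (v : H) :
    ((Submodule.orthogonalProjectionOnto K₁ v : H)) = (Submodule.orthogonalProjectionOnto K₂ v : H) := by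
  subst h; rfl

/-- The sup defining the sine of the angle is an operator norm. -/
lemma sinAngle_aux {H : Type*} [NormedAddCommGroup H] [InnerProductSpace ℂ H]
    (W L : Submodule ℂ H) [Submodule.HasOrthogonalProjection L] :
    sSup {r | ∃ v ∈ W, ‖v‖ = 1 ∧ r = ‖(Submodule.orthogonalProjectionOnto L v : H)‖}
      = ‖(Submodule.orthogonalProjectionOnto L).comp W.subtypeL‖ := by
  set f := (Submodule.orthogonalProjectionOnto L).comp W.subtypeL with hf
  set S := {r | ∃ v ∈ W, ‖v‖ = 1 ∧ r = ‖(Submodule.orthogonalProjectionOnto L v : H)‖} with hS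
  have hfx : ∀ x : W, ‖f x‖ = ‖(Submodule.orthogonalProjectionOnto L (x : H) : H)‖ := fun x => rfl
  by_cases hW : W = ⊥
  · have hSe : S = ∅ := by
      ext r
      simp only [hS, Set.mem_setOf_eq, Set.mem_empty_iff_false, iff_false]
      rintro ⟨v, hv, hv1, -⟩
      rw [hW, Submodule.mem_bot] at hv
      simp [hv] at hv1
    have hsub : Subsingleton W := by rw [hW]; infer_instance
    have hf0 : f = 0 := by
      ext x
      rw [Subsingleton.elim x 0]
      simp
    rw [hSe, Real.sSup_empty, hf0]
    rw [ContinuousLinearMap.opNorm_zero]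
  · obtain ⟨v, hvW, hv0⟩ := Submodule.exists_mem_ne_zero_of_ne_bot hW
    have hunit : (‖v‖⁻¹ • v) ∈ W := W.smul_mem _ hvW
    have hnv : ‖v‖ ≠ 0 := norm_ne_zero_iff.2 hv0
    have hunitnorm : ‖(‖v‖⁻¹ : ℂ) • v‖ = 1 := by
      rw [norm_smul]
      simp [abs_of_nonneg (norm_nonneg v), hnv]
    have hSne : S.Nonempty :=
      ⟨_, (‖v‖⁻¹ : ℂ) • v, W.smul_mem _ hvW, hunitnorm, rfl⟩
    have hbd : ∀ r ∈ S, r ≤ ‖f‖ := by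
      rintro r ⟨u, huW, hu1, rfl⟩
      have : ‖(Submodule.orthogonalProjectionOnto L u : H)‖ = ‖f ⟨u, huW⟩‖ := rfl
      rw [this]
      calc ‖f ⟨u, huW⟩‖ ≤ ‖f‖ * ‖(⟨u, huW⟩ : W)‖ := f.le_opNorm _
        _ = ‖f‖ := by
            have : ‖(⟨u, huW⟩ : W)‖ = 1 := hu1
            rw [this, mul_one]
    refine le_antisymm (csSup_le hSne hbd) ?_
    have hc0 : 0 ≤ sSup S := by
      obtain ⟨r, hr⟩ := hSne
      have hr' := hr
      have hrle := le_csSup ⟨‖f‖, hbd⟩ hr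
      obtain ⟨u, -, -, rfl⟩ := hr'
      exact le_trans (norm_nonneg _) hrle
    refine f.opNorm_le_bound hc0 ?_
    intro x
    by_cases hx : x = 0
    · simp [hx]
    · have hnx : ‖x‖ ≠ 0 := norm_ne_zero_iff.2 hx
      have hxu : ‖(‖x‖⁻¹ : ℂ) • x‖ = 1 := by
        rw [norm_smul]
        simp only [norm_inv, Complex.norm_real, Real.norm_eq_abs,
          abs_of_nonneg (norm_nonneg (x : W))]
        exact inv_mul_cancel₀ hnx
      have hmem : ‖f ((‖x‖⁻¹ : ℂ) • x)‖ ∈ S := by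
        refine ⟨((‖x‖⁻¹ : ℂ) • x : W), ((‖x‖⁻¹ : ℂ) • x).2, ?_, ?_⟩
        · exact hxu
        · rfl
      have hle : ‖f ((‖x‖⁻¹ : ℂ) • x)‖ ≤ sSup S := le_csSup ⟨‖f‖, hbd⟩ hmem
      have hnxC : (‖x‖ : ℂ) ≠ 0 := by exact_mod_cast hnx
      have key : (‖x‖ : ℂ) • f ((‖x‖⁻¹ : ℂ) • x) = f x := by
        rw [← map_smul, smul_smul, mul_inv_cancel₀ hnxC, one_smul]
      have hfe : ‖f x‖ = ‖x‖ * ‖f ((‖x‖⁻¹ : ℂ) • x)‖ := by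
        rw [← key, norm_smul, Complex.norm_real, Real.norm_eq_abs,
          abs_of_nonneg (norm_nonneg (x : W))]
      rw [hfe, mul_comm]
      exact mul_le_mul_of_nonneg_right hle (norm_nonneg x)

/-- For closed subspaces `U`, `V` of a Hilbert space,
`sin(U,V) = sin(Vᗮ, Uᗮ)`. -/
theorem sinAngle_orthogonal_symm
    {H : Type*} [NormedAddCommGroup H] [InnerProductSpace ℂ H] [CompleteSpace H]
    (U V : Submodule ℂ H) (hU : IsClosed (U : Set H)) (hV : IsClosed (V : Set H))
    [Submodule.HasOrthogonalProjection U] [Submodule.HasOrthogonalProjection V] :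
    sinAngle U V = sinAngle Vᗮ Uᗮ := by
  have cU : CompleteSpace U := hU.completeSpace_coe
  have cVp : CompleteSpace (Vᗮ : Submodule ℂ H) :=
    (Submodule.isClosed_orthogonal V).completeSpace_coe
  have hUU : Uᗮᗮ = U := Submodule.orthogonal_orthogonal U
  have hproj : ∀ v : H, ((Submodule.orthogonalProjectionOnto Uᗮᗮ v : H)) = (Submodule.orthogonalProjectionOnto U v : H) :=
    fun v => proj_congr hUU v
  unfold sinAngle
  simp only [hproj]
  rw [sinAngle_aux U Vᗮ, sinAngle_aux Vᗮ U]
  have hadj : ContinuousLinearMap.adjoint ((Submodule.orthogonalProjectionOnto Vᗮ).comp U.subtypeL)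
      = (Submodule.orthogonalProjectionOnto U).comp Vᗮ.subtypeL := by
    rw [ContinuousLinearMap.adjoint_comp, Submodule.adjoint_subtypeL,
      Submodule.adjoint_orthogonalProjection]
  have hnorm : ‖(Submodule.orthogonalProjectionOnto Vᗮ).comp U.subtypeL‖
      = ‖(Submodule.orthogonalProjectionOnto U).comp Vᗮ.subtypeL‖ := by
    rw [← hadj]
    exact (LinearIsometryEquiv.norm_map ContinuousLinearMap.adjoint _).symm
  rw [hnorm]
end
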